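/- Fix h > 0 and t > 0. Let f : ℝ → ℝ be piecewise constant and right-continuous on [0, t]: there exist points 0 = t₀ < t₁ < … < t_N = t and values c₀, …, c_N ∈ ℝ such that f(s) = c_k for s ∈ [t_k, t_{k+1}) (k = 0, …, N − 1) and f(t) = c_N. Then |∫₀ᵗ σ_h(s)·f(s) ds| ≤ (h/2)·|f(t)| + (h/2)·∑_{k=1}^{N} |c_k − c_{k−1}|, where the sum ∑_{k=1}^{N} |c_k − c_{k−1}| is the total variation of f on [0, t]. Moreover, if t is an integer multiple of h, then the first term can be dropped: |∫₀ᵗ σ_h(s)·f(s) ds| ≤ (h/2)·∑_{k=1}^{N} |c_k − c_{k−1}|. -/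

import Mathlib

open MeasureTheory

/-- The split-step kernel `σ_h(t) = 1 − 2·(⌊t/(h/2)⌋ mod 2)`: a piecewise constant
right-continuous function taking only the values `+1` and `−1`, switching value at
integer multiples of `h/2`. -/
noncomputable def splitKernel (h t : ℝ) : ℝ := 1 - 2 * ((⌊t / (h / 2)⌋ % 2 : ℤ) : ℝ)

lemma sk_meas (h : ℝ) : Measurable (splitKernel h) := by
  unfold splitKernel
  exact measurable_const.sub (measurable_const.mul
    ((measurable_from_top (f := fun i : ℤ => ((i % 2 : ℤ) : ℝ))).comp
      ((measurable_id.div_const _).floor)))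

lemma sk_abs (h t : ℝ) : |splitKernel h t| ≤ 1 := by
  unfold splitKernel
  rcases Int.emod_two_eq_zero_or_one ⌊t / (h / 2)⌋ with h2 | h2 <;> rw [h2] <;> norm_num

lemma sk_ii (h a b : ℝ) : IntervalIntegrable (splitKernel h) volume a b := by
  apply IntervalIntegrable.mono_fun (intervalIntegrable_const (c := (1:ℝ)))
    (sk_meas h).aestronglyMeasurable
  filter_upwards with x
  simpa using sk_abs h x

lemma sk_val (h : ℝ) (hh : 0 < h) (j : ℤ) (s : ℝ)
    (h1 : j * (h / 2) ≤ s) (h2 : s < (j + 1) * (h / 2)) :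
    splitKernel h s = if j % 2 = 0 then 1 else -1 := by
  have hh2 : (0:ℝ) < h / 2 := by linarith
  have hfl : ⌊s / (h / 2)⌋ = j := by
    rw [Int.floor_eq_iff]
    constructor
    · rw [le_div_iff₀ hh2]; linarith
    · rw [div_lt_iff₀ hh2]; push_cast; linarith
  unfold splitKernel
  rw [hfl]
  rcases Int.emod_two_eq_zero_or_one j with h2' | h2' <;> rw [h2'] <;> norm_num

lemma sk_int (h : ℝ) (hh : 0 < h) (j : ℤ) (a b : ℝ)
    (h1 : j * (h / 2) ≤ a) (hab : a ≤ b) (h2 : b ≤ (j + 1) * (h / 2)) :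
    ∫ s in a..b, splitKernel h s = (if j % 2 = 0 then 1 else -1) * (b - a) := by
  have hb : ∀ᵐ x : ℝ, x ≠ b := by
    refine ae_iff.mpr ?_
    simpa using measure_singleton b
  rw [intervalIntegral.integral_congr_ae (g := fun _ => if j % 2 = 0 then (1:ℝ) else -1)]
  · rw [intervalIntegral.integral_const]
    rw [smul_eq_mul]; ring
  · filter_upwards [hb] with x hx hmem
    rw [Set.uIoc_of_le hab] at hmem
    exact sk_val h hh j x (le_trans h1 hmem.1.le)
      (lt_of_lt_of_le (lt_of_le_of_ne hmem.2 hx) h2)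

lemma sk_G (h : ℝ) (hh : 0 < h) : ∀ n : ℕ, ∀ s : ℝ,
    (n : ℝ) * (h / 2) ≤ s → s ≤ ((n : ℝ) + 1) * (h / 2) →
    ∫ u in (0:ℝ)..s, splitKernel h u
      = if n % 2 = 0 then s - (n : ℝ) * (h / 2) else ((n : ℝ) + 1) * (h / 2) - s := by
  intro n
  induction n with
  | zero =>
    intro s h1 h2
    have := sk_int h hh 0 0 s (by norm_num) (by simpa using h1)
      (by push_cast; simpa using h2)
    simpa using this
  | succ n ih =>
    intro s h1 h2
    push_cast at h1 h2
    have hb : ((n:ℝ)+1)*(h/2) ≤ s := by linarith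
    have hmid : (n:ℝ)*(h/2) ≤ ((n:ℝ)+1)*(h/2) := by nlinarith
    have I1 := ih (((n:ℝ)+1)*(h/2)) hmid le_rfl
    have I2 := sk_int h hh ((n:ℤ)+1) (((n:ℝ)+1)*(h/2)) s (by push_cast; linarith) hb
      (by push_cast; linarith)
    have hadd := intervalIntegral.integral_add_adjacent_intervals
      (a := (0:ℝ)) (b := ((n:ℝ)+1)*(h/2)) (c := s) (sk_ii h _ _) (sk_ii h _ _)
    rw [← hadd, I1, I2]
    rcases Nat.even_or_odd n with he | ho
    · have h0 : n % 2 = 0 := Nat.even_iff.mp he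
      have h1' : (n+1) % 2 = 1 := by omega
      have h2' : ((n:ℤ)+1) % 2 = 1 := by omega
      rw [h0, h1', h2']
      push_cast
      norm_num
      ring
    · have h0 : n % 2 = 1 := Nat.odd_iff.mp ho
      have h1' : (n+1) % 2 = 0 := by omega
      have h2' : ((n:ℤ)+1) % 2 = 0 := by omega
      rw [h0, h1', h2']
      push_cast
      norm_num

lemma sk_G_mem (h : ℝ) (hh : 0 < h) (s : ℝ) (hs : 0 ≤ s) :
    (0 ≤ ∫ u in (0:ℝ)..s, splitKernel h u) ∧ (∫ u in (0:ℝ)..s, splitKernel h u) ≤ h / 2 := by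
  have hh2 : (0:ℝ) < h / 2 := by linarith
  set n : ℕ := ⌊s / (h / 2)⌋.toNat with hn
  have hfl0 : 0 ≤ ⌊s / (h / 2)⌋ := Int.floor_nonneg.mpr (by positivity)
  have hcast : (n : ℤ) = ⌊s / (h / 2)⌋ := by rw [hn]; exact Int.toNat_of_nonneg hfl0
  have hcastR : (n : ℝ) = ((⌊s / (h / 2)⌋ : ℤ) : ℝ) := by exact_mod_cast hcast
  have hl : (n : ℝ) * (h / 2) ≤ s := by
    have := Int.floor_le (s / (h / 2))
    have h' : (n : ℝ) ≤ s / (h / 2) := by rw [hcastR]; exact this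
    calc (n : ℝ) * (h / 2) ≤ (s / (h / 2)) * (h / 2) := by nlinarith
    _ = s := by field_simp
  have hr : s ≤ ((n : ℝ) + 1) * (h / 2) := by
    have := (Int.lt_floor_add_one (s / (h / 2))).le
    have h' : s / (h / 2) ≤ (n : ℝ) + 1 := by rw [hcastR]; exact this
    calc s = (s / (h / 2)) * (h / 2) := by field_simp
    _ ≤ ((n : ℝ) + 1) * (h / 2) := by nlinarith
  rw [sk_G h hh n s hl hr]
  have hx : ((n : ℝ) + 1) * (h / 2) = (n : ℝ) * (h / 2) + h / 2 := by ring
  split <;> constructor <;> linarith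

lemma sk_G_zero (h : ℝ) (hh : 0 < h) (n : ℕ) :
    (∫ u in (0:ℝ)..((n : ℝ) * h), splitKernel h u) = 0 := by
  have h1 : ((2 * n : ℕ) : ℝ) * (h / 2) ≤ (n : ℝ) * h := le_of_eq (by push_cast; ring)
  have h2 : (n : ℝ) * h ≤ (((2 * n : ℕ) : ℝ) + 1) * (h / 2) := by push_cast; nlinarith
  rw [sk_G h hh (2 * n) _ h1 h2]
  have : (2 * n) % 2 = 0 := by omega
  rw [this]
  push_cast
  norm_num
  ring

lemma abel_sum (G c : ℕ → ℝ) (M : ℕ) :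
    ∑ k ∈ Finset.range (M + 1), c k * (G (k + 1) - G k)
      = c M * G (M + 1) - c 0 * G 0
        - ∑ k ∈ Finset.range M, (c (k + 1) - c k) * G (k + 1) := by
  induction M with
  | zero => simp; ring
  | succ n ih =>
    rw [Finset.sum_range_succ, ih, Finset.sum_range_succ]
    ring

/-- For a piecewise constant right-continuous `f` on `[0,t]` with
jump points `0 = t₀ < t₁ < … < t_N = t` and values `c₀, …, c_N`, one has
`|∫₀ᵗ σ_h(s)·f(s) ds| ≤ (h/2)·|f(t)| + (h/2)·∑_{k=1}^N |c_k − c_{k−1}|`, and if `t` is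
an integer multiple of `h` then the first term may be dropped. -/
theorem splitKernel_mul_piecewiseConst_integral_bound
    (h t : ℝ) (hh : 0 < h) (ht : 0 < t)
    (N : ℕ) (tt : ℕ → ℝ) (c : ℕ → ℝ) (f : ℝ → ℝ)
    (htt0 : tt 0 = 0) (httN : tt N = t)
    (htt : ∀ k < N, tt k < tt (k + 1))
    (hf : ∀ k < N, ∀ s ∈ Set.Ico (tt k) (tt (k + 1)), f s = c k)
    (hft : f t = c N) :
    |∫ s in (0:ℝ)..t, splitKernel h s * f s| ≤
        h / 2 * |f t| + h / 2 * ∑ k ∈ Finset.Icc 1 N, |c k - c (k - 1)| ∧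
      ((∃ n : ℕ, t = n * h) →
        |∫ s in (0:ℝ)..t, splitKernel h s * f s| ≤
          h / 2 * ∑ k ∈ Finset.Icc 1 N, |c k - c (k - 1)|) := by
  have hh2 : (0:ℝ) < h / 2 := by linarith
  have hN : 0 < N := by
    rcases Nat.eq_zero_or_pos N with h0 | h0
    · rw [h0, htt0] at httN; linarith
    · exact h0
  obtain ⟨M, hM⟩ : ∃ M, N = M + 1 := ⟨N - 1, by omega⟩
  have httle : ∀ k, k < N → tt k ≤ tt (k + 1) := fun k hk => (htt k hk).le
  have htt_nonneg : ∀ k, k ≤ N → 0 ≤ tt k := by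
    intro k
    induction k with
    | zero => intro _; rw [htt0]
    | succ n ih => intro hk; exact le_trans (ih (by omega)) (httle n (by omega))
  set Gk : ℕ → ℝ := fun k => ∫ u in (0:ℝ)..tt k, splitKernel h u with hGk
  -- integrability of pieces
  have hint : ∀ k < N, IntervalIntegrable (fun s => splitKernel h s * f s)
      volume (tt k) (tt (k + 1)) := by
    intro k hk
    refine ((sk_ii h (tt k) (tt (k + 1))).mul_const (c k)).congr_ae ?_
    have hb : ∀ᵐ x : ℝ, x ≠ tt (k + 1) := by
      refine ae_iff.mpr ?_
      simpa using measure_singleton (tt (k + 1))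
    filter_upwards [ae_restrict_mem measurableSet_uIoc, ae_restrict_of_ae hb] with x hxI hxb
    rw [Set.uIoc_of_le (httle k hk)] at hxI
    rw [hf k hk x ⟨hxI.1.le, lt_of_le_of_ne hxI.2 hxb⟩]
  -- value of each piece
  have hpiece : ∀ k < N, (∫ s in (tt k)..(tt (k + 1)), splitKernel h s * f s)
      = c k * (Gk (k + 1) - Gk k) := by
    intro k hk
    have h1 : (∫ s in (tt k)..(tt (k + 1)), splitKernel h s * f s)
        = ∫ s in (tt k)..(tt (k + 1)), splitKernel h s * c k := by
      apply intervalIntegral.integral_congr_ae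
      have hb : ∀ᵐ x : ℝ, x ≠ tt (k + 1) := by
        refine ae_iff.mpr ?_
        simpa using measure_singleton (tt (k + 1))
      filter_upwards [hb] with x hxb hxI
      rw [Set.uIoc_of_le (httle k hk)] at hxI
      rw [hf k hk x ⟨hxI.1.le, lt_of_le_of_ne hxI.2 hxb⟩]
    rw [h1, intervalIntegral.integral_mul_const,
      ← intervalIntegral.integral_interval_sub_left (sk_ii h 0 (tt (k + 1))) (sk_ii h 0 (tt k))]
    simp only [hGk]
    ring
  -- total integral as a sum
  have htot : (∫ s in (0:ℝ)..t, splitKernel h s * f s)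
      = ∑ k ∈ Finset.range N, c k * (Gk (k + 1) - Gk k) := by
    have hsum := intervalIntegral.sum_integral_adjacent_intervals
      (f := fun s => splitKernel h s * f s) (μ := volume) (a := tt) hint
    rw [htt0, httN] at hsum
    rw [← hsum]
    refine Finset.sum_congr rfl fun k hk => ?_
    simpa using hpiece k (Finset.mem_range.mp hk)
  have hGk0 : Gk 0 = 0 := by simp only [hGk, htt0, intervalIntegral.integral_same]
  have hEq : (∫ s in (0:ℝ)..t, splitKernel h s * f s)
      = c M * Gk N - ∑ k ∈ Finset.range M, (c (k + 1) - c k) * Gk (k + 1) := by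
    rw [htot, hM, abel_sum, hGk0]
    ring_nf
  have hGk_mem : ∀ k, k ≤ N → 0 ≤ Gk k ∧ Gk k ≤ h / 2 :=
    fun k hk => sk_G_mem h hh (tt k) (htt_nonneg k hk)
  have hsumabs : |∑ k ∈ Finset.range M, (c (k + 1) - c k) * Gk (k + 1)|
      ≤ h / 2 * ∑ k ∈ Finset.range M, |c (k + 1) - c k| := by
    calc |∑ k ∈ Finset.range M, (c (k + 1) - c k) * Gk (k + 1)|
        ≤ ∑ k ∈ Finset.range M, |(c (k + 1) - c k) * Gk (k + 1)| :=
          Finset.abs_sum_le_sum_abs _ _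
      _ ≤ ∑ k ∈ Finset.range M, |c (k + 1) - c k| * (h / 2) := by
          refine Finset.sum_le_sum fun k hk => ?_
          rw [abs_mul]
          have hm := hGk_mem (k + 1) (by rw [hM]; exact Nat.succ_le_succ (Finset.mem_range.mp hk).le)
          have : |Gk (k + 1)| ≤ h / 2 := abs_le.mpr ⟨by linarith [hm.1], hm.2⟩
          exact mul_le_mul_of_nonneg_left this (abs_nonneg _)
      _ = h / 2 * ∑ k ∈ Finset.range M, |c (k + 1) - c k| := by
          rw [Finset.mul_sum]; exact Finset.sum_congr rfl fun k _ => mul_comm _ _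
  have hIcc : ∑ k ∈ Finset.Icc 1 N, |c k - c (k - 1)|
      = ∑ k ∈ Finset.range N, |c (k + 1) - c k| := by
    rw [← Finset.Ico_add_one_right_eq_Icc, Finset.sum_Ico_eq_sum_range]
    refine Finset.sum_congr (by norm_num) fun k _ => ?_
    have h1 : 1 + k - 1 = k := by omega
    have h2 : 1 + k = k + 1 := by omega
    rw [h1, h2]
  rw [hIcc, hM, Finset.sum_range_succ]
  set S := ∑ k ∈ Finset.range M, |c (k + 1) - c k| with hS
  have hS0 : 0 ≤ S := Finset.sum_nonneg fun k _ => abs_nonneg _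
  have hcM : |c M| ≤ |c (M + 1)| + |c (M + 1) - c M| := by
    have h1 := abs_sub_abs_le_abs_sub (c M) (c (M + 1))
    have h2 : |c M - c (M + 1)| = |c (M + 1) - c M| := abs_sub_comm _ _
    linarith
  have hGN := hGk_mem N le_rfl
  have hft' : |f t| = |c (M + 1)| := by rw [hft, hM]
  have htri : ∀ a b : ℝ, |a - b| ≤ |a| + |b| := by
    intro a b
    rw [sub_eq_add_neg]
    exact (abs_add_le _ _).trans (by rw [abs_neg])
  have habsI : |∫ s in (0:ℝ)..t, splitKernel h s * f s| ≤ |c M| * (h / 2) + h / 2 * S := by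
    rw [hEq]
    have h1 : |c M * Gk N| ≤ |c M| * (h / 2) := by
      rw [abs_mul]
      exact mul_le_mul_of_nonneg_left (abs_le.mpr ⟨by linarith [hGN.1], hGN.2⟩) (abs_nonneg _)
    exact (htri _ _).trans (by linarith [hsumabs])
  constructor
  · have hmul := mul_le_mul_of_nonneg_right hcM hh2.le
    have hexp : (|c (M + 1)| + |c (M + 1) - c M|) * (h / 2)
        = h / 2 * |c (M + 1)| + h / 2 * |c (M + 1) - c M| := by ring
    rw [hft']
    linarith
  · rintro ⟨n, hn⟩
    have hGN0 : Gk N = 0 := by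
      simp only [hGk]
      rw [httN, hn]
      exact sk_G_zero h hh n
    rw [hEq, hGN0, mul_zero, zero_sub, abs_neg]
    have h0 := mul_nonneg hh2.le (abs_nonneg (c (M + 1) - c M))
    have hexp2 : h / 2 * (S + |c (M + 1) - c M|) = h / 2 * S + h / 2 * |c (M + 1) - c M| := by
      ring
    linarith [hsumabs]
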